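/- Let v¹, …, vᵐ ∈ ℝ² be nonzero vectors such that ‖x‖_N = max_{1 ≤ k ≤ m} |⟨x, vᵏ⟩| defines a norm on ℝ², let 0 < q < 1, and let z¹, z², … be a sequence of points of ℝ² such that ‖z^i − z^j‖_N = (q^i − q^j)/(1−q) for all i < j. Then there exist k ∈ {1, …, m} and a sign σ ∈ {−1, +1} such that ‖z^i − z^j‖_N = σ·⟨z^i − z^j, vᵏ⟩ for all i < j. -/

import Mathlib

/-- The standard Euclidean inner product on the plane. -/
def dot2 (x y : Fin 2 → ℝ) : ℝ := x 0 * y 0 + x 1 * y 1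

lemma dot2_add (x y w : Fin 2 → ℝ) : dot2 (x + y) w = dot2 x w + dot2 y w := by
  simp [dot2, Pi.add_apply]; ring

/-- For a polygonal norm `N x = max_k |⟨x, vᵏ⟩|` and a sequence `z¹, z², …` with
`‖zⁱ − zʲ‖_N = (qⁱ − qʲ)/(1−q)` for `i < j`, there is a single `k` and a sign `σ` with
`‖zⁱ − zʲ‖_N = σ⟨zⁱ − zʲ, vᵏ⟩` for all `i < j`. -/
theorem geometric_sequence_has_direction (m : ℕ) (hm : 0 < m)
    (v : Fin m → (Fin 2 → ℝ)) (hv : ∀ k, v k ≠ 0)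
    (N : (Fin 2 → ℝ) → ℝ)
    (hNmax : ∀ x, IsGreatest (Set.range fun k => |dot2 x (v k)|) (N x))
    (hNnorm : ∀ x, N x = 0 → x = 0)
    (q : ℝ) (hq0 : 0 < q) (hq1 : q < 1)
    (z : ℕ → (Fin 2 → ℝ))
    (hz : ∀ i j : ℕ, 1 ≤ i → i < j → N (z i - z j) = (q ^ i - q ^ j) / (1 - q)) :
    ∃ (k : Fin m) (σ : ℝ), (σ = 1 ∨ σ = -1) ∧
      ∀ i j : ℕ, 1 ≤ i → i < j → N (z i - z j) = σ * dot2 (z i - z j) (v k) := by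
  have hqne : (1 : ℝ) - q ≠ 0 := by linarith
  -- upper bound
  have hub : ∀ x k, |dot2 x (v k)| ≤ N x := fun x k => (hNmax x).2 ⟨k, rfl⟩
  -- achievement of the max with a sign
  have hach : ∀ x, ∃ p : Fin m × Bool,
      N x = (if p.2 then (1:ℝ) else -1) * dot2 x (v p.1) := by
    intro x
    obtain ⟨k, hk⟩ := (hNmax x).1
    rcases abs_cases (dot2 x (v k)) with ⟨h, _⟩ | ⟨h, _⟩
    · exact ⟨(k, true), by simp [← hk, h]⟩
    · exact ⟨(k, false), by norm_num [← hk, h]⟩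
  -- the key step: if (k, σ) achieves the max for `z 1 - z J`, it achieves it
  -- for all pairs inside [1, J]
  have step : ∀ (k : Fin m) (σ : ℝ), (σ = 1 ∨ σ = -1) → ∀ J a b : ℕ,
      1 ≤ a → a < b → b < J → N (z 1 - z J) = σ * dot2 (z 1 - z J) (v k) →
      N (z a - z b) = σ * dot2 (z a - z b) (v k) := by
    intro k σ hσ J a b ha hab hbJ hJ
    have hσle : ∀ x, σ * dot2 x (v k) ≤ N x := by
      intro x
      rcases hσ with h | h <;> subst h
      · rw [one_mul]; exact (le_abs_self _).trans (hub x k)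
      · rw [neg_one_mul]; exact (neg_le_abs _).trans (hub x k)
    rcases eq_or_lt_of_le ha with h1 | h1
    · -- a = 1 : split into two pieces
      subst h1
      have hN1 := hz 1 b le_rfl hab
      have hN2 := hz b J hab.le hbJ
      have hNt := hz 1 J le_rfl (hab.trans hbJ)
      have hsum : N (z 1 - z b) + N (z b - z J) = N (z 1 - z J) := by
        rw [hN1, hN2, hNt]; field_simp; ring
      have hsplit : z 1 - z J = (z 1 - z b) + (z b - z J) := by abel
      have hd : dot2 (z 1 - z J) (v k)
          = dot2 (z 1 - z b) (v k) + dot2 (z b - z J) (v k) := by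
        rw [hsplit, dot2_add]
      rw [hd, mul_add] at hJ
      have h1le := hσle (z 1 - z b)
      have h2le := hσle (z b - z J)
      linarith
    · -- 1 < a : split into three pieces
      have hN1 := hz 1 a le_rfl h1
      have hN2 := hz a b ha hab
      have hN3 := hz b J (ha.trans hab.le) hbJ
      have hNt := hz 1 J le_rfl (h1.trans (hab.trans hbJ))
      have hsum : N (z 1 - z a) + N (z a - z b) + N (z b - z J) = N (z 1 - z J) := by
        rw [hN1, hN2, hN3, hNt]; field_simp; ring
      have hsplit : z 1 - z J = (z 1 - z a) + (z a - z b) + (z b - z J) := by abel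
      have hd : dot2 (z 1 - z J) (v k)
          = dot2 (z 1 - z a) (v k) + dot2 (z a - z b) (v k) + dot2 (z b - z J) (v k) := by
        rw [hsplit, dot2_add, dot2_add]
      rw [hd, mul_add, mul_add] at hJ
      have h1le := hσle (z 1 - z a)
      have h2le := hσle (z a - z b)
      have h3le := hσle (z b - z J)
      linarith
  -- pigeonhole
  set f : ℕ → Fin m × Bool := fun j => (hach (z 1 - z (j + 2))).choose with hf_def
  have hf : ∀ j, N (z 1 - z (j + 2))
      = (if (f j).2 then (1:ℝ) else -1) * dot2 (z 1 - z (j + 2)) (v (f j).1) :=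
    fun j => (hach (z 1 - z (j + 2))).choose_spec
  obtain ⟨p, hp⟩ := Finite.exists_infinite_fiber f
  have hpS : (f ⁻¹' {p}).Infinite := Set.infinite_coe_iff.mp hp
  refine ⟨p.1, if p.2 then 1 else -1, by cases p.2 <;> simp, ?_⟩
  intro i j hi hij
  obtain ⟨J, hJS, hjJ⟩ := hpS.exists_gt j
  have hfJ : f J = p := hJS
  have hJeq := hf J
  rw [hfJ] at hJeq
  exact step p.1 _ (by cases p.2 <;> simp) (J + 2) i j hi hij (by omega) hJeq
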